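/- For every nonnegative n-tuple x, min_{1≤i≤n} M^r x(i) = ā(x); in other words, M^r x(i) ≥ ā(x) for all i, and there exists an index i* such that the full interval [i* : i*+n−1] is maximal, i.e. a_{[i*:i*+n−1]}(x) = M^r x(i*). -/

import Mathlib

open Finset

/-- Interval average `a_{[a:b]}(x) = (x_a + … + x_b)/(b-a+1)`. -/
noncomputable def iavg (x : ℤ → ℝ) (a b : ℤ) : ℝ :=
  (∑ j ∈ Finset.Icc a b, x j) / ((b - a + 1 : ℤ) : ℝ)

/-- Right maximal function `M^r x(i) = sup_{r ≥ 1} a_{[i : i+r−1]}(x)`. -/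
noncomputable def Mr (x : ℤ → ℝ) (i : ℤ) : ℝ :=
  sSup {a : ℝ | ∃ r : ℕ, 1 ≤ r ∧ a = iavg x i (i + (r : ℤ) - 1)}

private lemma sum_Ico_split (f : ℤ → ℝ) {a b c : ℤ} (h1 : a ≤ b) (h2 : b ≤ c) :
    ∑ j ∈ Finset.Ico a b, f j + ∑ j ∈ Finset.Ico b c, f j = ∑ j ∈ Finset.Ico a c, f j := by
  rw [← Finset.sum_union (Finset.Ico_disjoint_Ico_consecutive a b c),
    Finset.Ico_union_Ico_eq_Ico h1 h2]

private lemma icc_eq_ico (a b : ℤ) : Finset.Icc a b = Finset.Ico a (b + 1) := rfl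

private lemma iavg_eq_ico (x : ℤ → ℝ) (i : ℤ) (r : ℕ) :
    iavg x i (i + (r : ℤ) - 1) = (∑ j ∈ Finset.Ico i (i + (r : ℤ)), x j) / (r : ℝ) := by
  unfold iavg
  congr 1
  · rw [icc_eq_ico]; ring_nf
  · push_cast; ring

section main
variable {n : ℕ} {x : ℤ → ℝ}

private lemma sum_shift (hper : ∀ i, x (i + (n : ℤ)) = x i) (a b : ℤ) :
    ∑ j ∈ Finset.Ico (a + (n : ℤ)) (b + (n : ℤ)), x j = ∑ j ∈ Finset.Ico a b, x j := by
  rw [← Finset.map_add_right_Ico, Finset.sum_map]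
  exact Finset.sum_congr rfl fun j _ => hper j

/-- any length-n window has the same sum -/
private lemma window (hper : ∀ i, x (i + (n : ℤ)) = x i) (i : ℤ) :
    ∑ j ∈ Finset.Ico i (i + (n : ℤ)), x j = ∑ j ∈ Finset.Ico 1 (1 + (n : ℤ)), x j := by
  have step : ∀ i : ℤ, ∑ j ∈ Finset.Ico (i + 1) (i + 1 + (n : ℤ)), x j
      = ∑ j ∈ Finset.Ico i (i + (n : ℤ)), x j := by
    intro i
    have hsingle : ∀ a : ℤ, ∑ j ∈ Finset.Ico a (a + 1), x j = x a := by
      intro a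
      rw [show Finset.Ico a (a+1) = Finset.Icc a a from rfl, Finset.Icc_self,
        Finset.sum_singleton]
    have h1 : ∑ j ∈ Finset.Ico i (i+1), x j + ∑ j ∈ Finset.Ico (i+1) (i + 1 + (n:ℤ)), x j
        = ∑ j ∈ Finset.Ico i (i + 1 + (n:ℤ)), x j :=
      sum_Ico_split x (by omega) (by omega)
    have h2 : ∑ j ∈ Finset.Ico i (i + (n:ℤ)), x j
        + ∑ j ∈ Finset.Ico (i + (n:ℤ)) (i + (n:ℤ) + 1), x j
        = ∑ j ∈ Finset.Ico i (i + 1 + (n:ℤ)), x j := by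
      rw [sum_Ico_split x (by omega) (by omega)]
      ring_nf
    rw [hsingle i] at h1
    rw [hsingle (i + (n:ℤ)), hper i] at h2
    linarith
  have all0 : ∀ i : ℤ, ∑ j ∈ Finset.Ico i (i + (n : ℤ)), x j
      = ∑ j ∈ Finset.Ico 0 (0 + (n : ℤ)), x j := by
    intro i
    induction i using Int.induction_on with
    | zero => rfl
    | succ k ih => rw [show ((k:ℤ)+1) = (k:ℤ)+1 from rfl, step (k:ℤ), ih]
    | pred k ih => rw [← ih, ← step (-(k:ℤ) - 1)]; norm_num
  rw [all0 i, ← all0 1]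

/-- sum over k periods -/
private lemma ksum (hper : ∀ i, x (i + (n : ℤ)) = x i) (i : ℤ) (k : ℕ) :
    ∑ j ∈ Finset.Ico i (i + (k : ℤ) * (n : ℤ)), x j
      = (k : ℝ) * ∑ j ∈ Finset.Ico 1 (1 + (n : ℤ)), x j := by
  induction k with
  | zero => simp
  | succ k ih =>
    have hkn : (0:ℤ) ≤ (k:ℤ)*(n:ℤ) := by positivity
    have hsplit : ∑ j ∈ Finset.Ico i (i + (k:ℤ)*(n:ℤ)), x j
        + ∑ j ∈ Finset.Ico (i + (k:ℤ)*(n:ℤ)) (i + (k:ℤ)*(n:ℤ) + (n:ℤ)), x j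
        = ∑ j ∈ Finset.Ico i (i + (k:ℤ)*(n:ℤ) + (n:ℤ)), x j :=
      sum_Ico_split x (by omega) (by omega)
    have h2 := window hper (i + (k:ℤ)*(n:ℤ))
    rw [show i + ((k+1 : ℕ) : ℤ) * (n:ℤ) = i + (k:ℤ)*(n:ℤ) + (n:ℤ) by push_cast; ring,
      ← hsplit, ih, h2]
    push_cast
    ring
end main

theorem min_right_maximal_eq_mean (n : ℕ) (hn : 1 ≤ n) (x : ℤ → ℝ)
    (hpos : ∀ i, 0 ≤ x i) (hper : ∀ i, x (i + (n : ℤ)) = x i) :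
    (∀ i : ℤ, iavg x 1 (n : ℤ) ≤ Mr x i) ∧
    ∃ i ∈ Finset.Icc (1 : ℤ) (n : ℤ), iavg x i (i + (n : ℤ) - 1) = Mr x i := by
  set S : ℝ := ∑ j ∈ Finset.Ico 1 (1 + (n : ℤ)), x j with hS
  have hnR : (0:ℝ) < n := by positivity
  have hA : iavg x 1 (n : ℤ) = S / n := by
    unfold iavg
    congr 1
    · rw [icc_eq_ico]; ring_nf; exact hS.symm
    · push_cast; ring
  set A : ℝ := S / n with hAdef
  have hnA : (n : ℝ) * A = S := by rw [hAdef]; field_simp [hnR.ne']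
  -- every element of the Mr set is ≤ S
  have hub : ∀ i : ℤ, ∀ a ∈ {a : ℝ | ∃ r : ℕ, 1 ≤ r ∧ a = iavg x i (i + (r : ℤ) - 1)},
      a ≤ S := by
    rintro i a ⟨r, hr, rfl⟩
    rw [iavg_eq_ico]
    have hsub : Finset.Ico i (i + (r:ℤ)) ⊆ Finset.Ico i (i + (r:ℤ) * (n:ℤ)) := by
      apply Finset.Ico_subset_Ico le_rfl
      have : (r:ℤ) ≤ (r:ℤ) * n := by nlinarith [Int.ofNat_le.mpr hn, Int.ofNat_le.mpr hr]
      omega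
    have hle : ∑ j ∈ Finset.Ico i (i + (r:ℤ)), x j
        ≤ ∑ j ∈ Finset.Ico i (i + (r:ℤ) * (n:ℤ)), x j :=
      Finset.sum_le_sum_of_subset_of_nonneg hsub (fun j _ _ => hpos j)
    rw [ksum hper] at hle
    have hrR : (0:ℝ) < r := by exact_mod_cast hr
    rw [div_le_iff₀ hrR]
    calc ∑ j ∈ Finset.Ico i (i + (r:ℤ)), x j ≤ (r:ℝ) * S := hle
    _ = S * r := by ring
  have hbdd : ∀ i : ℤ, BddAbove {a : ℝ | ∃ r : ℕ, 1 ≤ r ∧ a = iavg x i (i + (r : ℤ) - 1)} :=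
    fun i => ⟨S, hub i⟩
  have hmem : ∀ i : ℤ, A ∈ {a : ℝ | ∃ r : ℕ, 1 ≤ r ∧ a = iavg x i (i + (r : ℤ) - 1)} := by
    intro i
    refine ⟨n, hn, ?_⟩
    rw [iavg_eq_ico, window hper]
  have part1 : ∀ i : ℤ, iavg x 1 (n : ℤ) ≤ Mr x i := by
    intro i
    rw [hA]
    exact le_csSup (hbdd i) (hmem i)
  refine ⟨part1, ?_⟩
  -- define g
  set g : ℤ → ℝ := fun m => (∑ j ∈ Finset.Ico 1 m, x j) - (m : ℝ) * A with hg
  have gper : ∀ m : ℤ, 1 ≤ m → g (m + n) = g m := by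
    intro m hm
    have hsplit : ∑ j ∈ Finset.Ico 1 m, x j + ∑ j ∈ Finset.Ico m (m + (n:ℤ)), x j
        = ∑ j ∈ Finset.Ico 1 (m + (n:ℤ)), x j := sum_Ico_split x hm (by omega)
    simp only [hg]
    rw [← hsplit, window hper, ← hS]
    push_cast
    linarith [hnA]
  have greduce : ∀ k : ℕ, ∀ m : ℤ, 1 ≤ m → m ≤ (n:ℤ) + k →
      ∃ m0 ∈ Finset.Icc (1:ℤ) (n:ℤ), g m = g m0 := by
    intro k
    induction k with
    | zero =>
      intro m h1 h2
      exact ⟨m, Finset.mem_Icc.mpr ⟨h1, by omega⟩, rfl⟩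
    | succ k ih =>
      intro m h1 h2
      by_cases hc : m ≤ (n:ℤ) + k
      · exact ih m h1 hc
      · have hm : m = (n:ℤ) + k + 1 := by omega
        have h1' : 1 ≤ m - (n:ℤ) := by omega
        have : g m = g (m - n) := by
          rw [← gper (m - n) h1']
          ring_nf
        rw [this]
        refine ih (m - n) h1' (by omega)
  obtain ⟨i, hi, hmax⟩ := Finset.exists_max_image (Finset.Icc (1:ℤ) (n:ℤ)) g
    ⟨1, Finset.mem_Icc.mpr ⟨le_refl 1, by exact_mod_cast hn⟩⟩
  have hi1 : 1 ≤ i := (Finset.mem_Icc.mp hi).1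
  have gmax : ∀ m : ℤ, 1 ≤ m → g m ≤ g i := by
    intro m hm
    obtain ⟨m0, hm0, heq⟩ := greduce (m - n).toNat m hm
      (by have := Int.self_le_toNat (m - n); omega)
    rw [heq]
    exact hmax m0 hm0
  -- all right averages from i are ≤ A
  have key : ∀ r : ℕ, 1 ≤ r → ∑ j ∈ Finset.Ico i (i + (r:ℤ)), x j ≤ (r : ℝ) * A := by
    intro r hr
    have h := gmax (i + r) (by omega)
    simp only [hg] at h
    have hsplit : ∑ j ∈ Finset.Ico 1 i, x j + ∑ j ∈ Finset.Ico i (i + (r:ℤ)), x j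
        = ∑ j ∈ Finset.Ico 1 (i + (r:ℤ)), x j := sum_Ico_split x hi1 (by omega)
    push_cast at h
    linarith
  have hMr : Mr x i = A := by
    unfold Mr
    apply le_antisymm
    · apply csSup_le ⟨A, hmem i⟩
      rintro a ⟨r, hr, rfl⟩
      rw [iavg_eq_ico]
      have hrR : (0:ℝ) < r := by exact_mod_cast hr
      rw [div_le_iff₀ hrR]
      calc ∑ j ∈ Finset.Ico i (i + (r:ℤ)), x j ≤ (r:ℝ) * A := key r hr
      _ = A * r := by ring
    · exact le_csSup (hbdd i) (hmem i)
  refine ⟨i, hi, ?_⟩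
  rw [hMr, iavg_eq_ico, window hper, ← hS, hAdef]
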